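/- Let q be a prime power and F a finite extension field of GF(q) of degree m. Let G ∈ F[X] be a separable (squarefree) polynomial of degree r ≥ 1, and let α₁, …, αₙ be pairwise distinct elements of F with G(αᵢ) ≠ 0 for all i. Then the GF(q)-dimension k of the Goppa code Γ(L, G^q) satisfies k ≥ n − m(q−1)r. -/

import Mathlib

open Polynomial

noncomputable def goppaSum {K F : Type*} [Field K] [Field F] [Algebra K F] {n : ℕ}
    (α : Fin n → F) (c : Fin n → K) : Polynomial F :=
  ∑ i, Polynomial.C (algebraMap K F (c i)) *
    ∏ j ∈ Finset.univ.erase i, (Polynomial.X - Polynomial.C (α j))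

/-- The Goppa code `Γ(L, G)` as a `GF(q)`-subspace of `GF(q)ⁿ`. -/
noncomputable def goppaCode {K F : Type*} [Field K] [Field F] [Algebra K F] {n : ℕ}
    (α : Fin n → F) (G : Polynomial F) : Submodule K (Fin n → K) where
  carrier := {c | G ∣ goppaSum α c}
  add_mem' := by
    intro a b ha hb
    have h : goppaSum α (a + b) = goppaSum α a + goppaSum α b := by
      simp only [goppaSum, Pi.add_apply, map_add, add_mul, Finset.sum_add_distrib]
    simp only [Set.mem_setOf_eq] at *
    rw [h]
    exact dvd_add ha hb
  zero_mem' := by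
    simp only [Set.mem_setOf_eq, goppaSum, Pi.zero_apply, map_zero, Polynomial.C_0,
      zero_mul, Finset.sum_const_zero]
    exact dvd_zero _
  smul_mem' := by
    intro k c hc
    have h : goppaSum α (k • c) = Polynomial.C (algebraMap K F k) * goppaSum α c := by
      simp only [goppaSum, Pi.smul_apply, smul_eq_mul, map_mul, Finset.mul_sum, mul_assoc]
    simp only [Set.mem_setOf_eq] at *
    rw [h]
    exact Dvd.dvd.mul_left hc _

lemma algSum_pow_card {K E : Type*} [Field K] [Fintype K] [Field E] [Algebra K E]
    {n : ℕ} (c : Fin n → K) (d : Fin n → E) :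
    (∑ i, algebraMap K E (c i) * d i) ^ Fintype.card K =
      ∑ i, algebraMap K E (c i) * d i ^ Fintype.card K := by
  have hp : Fact (ringChar K).Prime := ⟨CharP.char_is_prime K _⟩
  haveI : CharP E (ringChar K) :=
    charP_of_injective_algebraMap (algebraMap K E).injective _
  obtain ⟨e, hprime, hcard⟩ := FiniteField.card K (ringChar K)
  rw [hcard, sum_pow_char_pow]
  refine Finset.sum_congr rfl fun i _ => ?_
  rw [mul_pow, ← hcard, ← map_pow, FiniteField.pow_card]

lemma key_local {K E : Type*} [Field K] [Fintype K] [Field E] [Algebra K E]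
    {n : ℕ} (c : Fin n → K) (μ : Fin n → E) (hμ : ∀ i, μ i ≠ 0)
    (h : X ^ (Fintype.card K - 1) ∣
        ∑ i, C (algebraMap K E (c i)) * ∏ j ∈ Finset.univ.erase i, (X - C (μ j))) :
    X ^ Fintype.card K ∣
        ∑ i, C (algebraMap K E (c i)) * ∏ j ∈ Finset.univ.erase i, (X - C (μ j)) := by
  set q := Fintype.card K with hqdef
  have hq2 : 2 ≤ q := Fintype.one_lt_card
  set N : E[X] := ∑ i, C (algebraMap K E (c i)) * ∏ j ∈ Finset.univ.erase i, (X - C (μ j))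
    with hN
  set f : E[X] := ∏ j, (X - C (μ j)) with hf
  set v : Fin n → E[X] := fun i => ∑ k ∈ Finset.range q, C (-(μ i)⁻¹ ^ (k + 1)) * X ^ k with hv
  set V : E[X] := ∑ i, C (algebraMap K E (c i)) * v i with hV
  -- Step A
  have hA : ∀ i, (X - C (μ i)) * v i = 1 - C ((μ i)⁻¹ ^ q) * X ^ q := by
    intro i
    have hterm : ∀ k : ℕ, (X - C (μ i)) * (C (-(μ i)⁻¹ ^ (k + 1)) * X ^ k) =
        C ((μ i)⁻¹ ^ k) * X ^ k - C ((μ i)⁻¹ ^ (k + 1)) * X ^ (k + 1) := by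
      intro k
      have h1 : C (μ i)⁻¹ * C (μ i) = (1 : E[X]) := by
        rw [← C_mul, inv_mul_cancel₀ (hμ i), C_1]
      simp only [map_neg, map_pow]
      linear_combination (C (μ i)⁻¹) ^ k * X ^ k * h1
    rw [hv, Finset.mul_sum]
    calc ∑ k ∈ Finset.range q, (X - C (μ i)) * (C (-(μ i)⁻¹ ^ (k + 1)) * X ^ k)
        = ∑ k ∈ Finset.range q,
            (C ((μ i)⁻¹ ^ k) * X ^ k - C ((μ i)⁻¹ ^ (k + 1)) * X ^ (k + 1)) :=
          Finset.sum_congr rfl fun k _ => hterm k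
      _ = C ((μ i)⁻¹ ^ 0) * X ^ 0 - C ((μ i)⁻¹ ^ q) * X ^ q :=
          Finset.sum_range_sub' (fun k => C ((μ i)⁻¹ ^ k) * X ^ k) q
      _ = 1 - C ((μ i)⁻¹ ^ q) * X ^ q := by simp
  -- Step B
  have hB : X ^ q ∣ N - f * V := by
    have : N - f * V = ∑ i, C (algebraMap K E (c i)) *
        ((∏ j ∈ Finset.univ.erase i, (X - C (μ j))) * (C ((μ i)⁻¹ ^ q) * X ^ q)) := by
      rw [hN, hV, Finset.mul_sum, ← Finset.sum_sub_distrib]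
      refine Finset.sum_congr rfl fun i _ => ?_
      have hfi : f = (X - C (μ i)) * ∏ j ∈ Finset.univ.erase i, (X - C (μ j)) :=
        (Finset.mul_prod_erase _ _ (Finset.mem_univ i)).symm
      rw [mul_left_comm f, ← mul_sub]
      congr 1
      have hfv : f * v i = (∏ j ∈ Finset.univ.erase i, (X - C (μ j))) * ((X - C (μ i)) * v i) := by
        rw [hfi]; ring
      rw [hfv, hA i, mul_sub, mul_one, sub_sub_cancel]
    rw [this]
    exact Finset.dvd_sum fun i _ => by
      exact Dvd.dvd.mul_left (Dvd.dvd.mul_left (dvd_mul_left _ _) _) _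
  -- Step C: coprimality and divisibility of V
  have hf0 : f.eval 0 ≠ 0 := by
    rw [hf, eval_prod]
    refine Finset.prod_ne_zero_iff.mpr fun j _ => ?_
    simp [hμ j, sub_eq_zero]
  have hcop : IsCoprime (X ^ (q - 1) : E[X]) f :=
    ((Polynomial.irreducible_X.coprime_iff_not_dvd).mpr (by
      rw [X_dvd_iff, coeff_zero_eq_eval_zero]; exact hf0)).pow_left
  have hfV : X ^ (q - 1) ∣ f * V := by
    have h1 : X ^ (q - 1) ∣ N - f * V := dvd_trans (pow_dvd_pow X (Nat.sub_le q 1)) hB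
    have h2 := dvd_sub h h1
    simpa using h2
  have hXV : X ^ (q - 1) ∣ V := hcop.dvd_of_dvd_mul_left hfV
  -- Step D: coefficients of V
  have hvcoeff : ∀ i t, (v i).coeff t = if t < q then -(μ i)⁻¹ ^ (t + 1) else 0 := by
    intro i t
    rw [hv]
    simp only [finset_sum_coeff, coeff_C_mul, coeff_X_pow, mul_ite, mul_one, mul_zero]
    rw [Finset.sum_ite_eq (Finset.range q) t fun k => -(μ i)⁻¹ ^ (k + 1)]
    simp [Finset.mem_range]
  have hVcoeff : ∀ t, V.coeff t =
      if t < q then -∑ i, algebraMap K E (c i) * (μ i)⁻¹ ^ (t + 1) else 0 := by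
    intro t
    rw [hV, finset_sum_coeff]
    simp only [coeff_C_mul, hvcoeff]
    by_cases htq : t < q
    · simp [htq, mul_neg, Finset.sum_neg_distrib]
    · simp [htq]
  -- p1 = 0
  have hXN : (X : E[X]) ∣ N := dvd_trans (dvd_pow_self X (by omega : q - 1 ≠ 0)) h
  have hN0 : N.eval 0 = 0 := by
    obtain ⟨P, hP⟩ := hXN; rw [hP]; simp
  have hp1 : (∑ i, algebraMap K E (c i) * (μ i)⁻¹) = 0 := by
    have hNe : N.eval 0 = ∑ i, algebraMap K E (c i) *
        ∏ j ∈ Finset.univ.erase i, (-(μ j)) := by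
      rw [hN, eval_finset_sum]
      refine Finset.sum_congr rfl fun i _ => ?_
      rw [eval_mul, eval_C, eval_prod]
      simp [zero_sub]
    have h2 : ∀ i : Fin n, ∏ j ∈ Finset.univ.erase i, (-(μ j)) = f.eval 0 * (-(μ i))⁻¹ := by
      intro i
      have hfe : f.eval 0 = (-(μ i)) * ∏ j ∈ Finset.univ.erase i, (-(μ j)) := by
        rw [hf, eval_prod]
        simp only [eval_sub, eval_X, eval_C, zero_sub]
        exact (Finset.mul_prod_erase _ _ (Finset.mem_univ i)).symm
      rw [hfe, mul_comm (-(μ i)), mul_assoc,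
        mul_inv_cancel₀ (neg_ne_zero.mpr (hμ i)), mul_one]
    have h3 : f.eval 0 * (∑ i, algebraMap K E (c i) * (-(μ i))⁻¹) = 0 := by
      rw [Finset.mul_sum]
      calc ∑ i, f.eval 0 * (algebraMap K E (c i) * (-(μ i))⁻¹)
          = ∑ i, algebraMap K E (c i) * ∏ j ∈ Finset.univ.erase i, (-(μ j)) :=
            Finset.sum_congr rfl fun i _ => by rw [h2 i]; ring
        _ = 0 := by rw [← hNe, hN0]
    have h4 : (∑ i, algebraMap K E (c i) * (-(μ i))⁻¹) = 0 :=
      (mul_eq_zero.mp h3).resolve_left hf0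
    have h5 : ∑ i, algebraMap K E (c i) * (μ i)⁻¹ =
        -∑ i, algebraMap K E (c i) * (-(μ i))⁻¹ := by
      simp [inv_neg]
    rw [h5, h4, neg_zero]
  -- p_q = 0
  have hpq : (∑ i, algebraMap K E (c i) * (μ i)⁻¹ ^ q) = 0 := by
    have h6 := algSum_pow_card c (fun i => (μ i)⁻¹)
    rw [← hqdef] at h6
    rw [← h6, hp1, zero_pow (by omega : q ≠ 0)]
  -- V = 0
  have hV0 : V = 0 := by
    ext t
    rw [coeff_zero]
    rcases lt_trichotomy t (q - 1) with ht | ht | ht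
    · exact (X_pow_dvd_iff.mp hXV) t ht
    · rw [hVcoeff, if_pos (by omega)]
      have ht1 : t + 1 = q := by omega
      rw [ht1, hpq, neg_zero]
    · rw [hVcoeff, if_neg (by omega)]
  have hfin : N - f * V = N := by rw [hV0, mul_zero, sub_zero]
  rwa [hfin] at hB

lemma dvd_comp_shift {E : Type*} [Field E] (P : E[X]) (β : E) (m : ℕ) :
    (X - C β) ^ m ∣ P ↔ X ^ m ∣ P.comp (X + C β) := by
  constructor
  · rintro ⟨Q, rfl⟩
    refine ⟨Q.comp (X + C β), ?_⟩
    rw [mul_comp, pow_comp, sub_comp, X_comp, C_comp]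
    ring
  · rintro ⟨Q, hQ⟩
    have hP : P = (P.comp (X + C β)).comp (X - C β) := by
      rw [comp_assoc]
      simp
    rw [hP, hQ, mul_comp, pow_comp, X_comp]
    exact ⟨Q.comp (X - C β), rfl⟩

lemma key_root {K E : Type*} [Field K] [Fintype K] [Field E] [Algebra K E] {n : ℕ}
    (c : Fin n → K) (a : Fin n → E) (β : E) (hβ : ∀ i, a i ≠ β)
    (h : (X - C β) ^ (Fintype.card K - 1) ∣
        ∑ i, C (algebraMap K E (c i)) * ∏ j ∈ Finset.univ.erase i, (X - C (a j))) :
    (X - C β) ^ Fintype.card K ∣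
        ∑ i, C (algebraMap K E (c i)) * ∏ j ∈ Finset.univ.erase i, (X - C (a j)) := by
  rw [dvd_comp_shift] at h ⊢
  have hcomp : (∑ i, C (algebraMap K E (c i)) *
      ∏ j ∈ Finset.univ.erase i, (X - C (a j))).comp (X + C β) =
      ∑ i, C (algebraMap K E (c i)) * ∏ j ∈ Finset.univ.erase i, (X - C (a j - β)) := by
    rw [← coe_compRingHom_apply, map_sum]
    simp only [coe_compRingHom_apply]
    refine Finset.sum_congr rfl fun i _ => ?_
    rw [mul_comp, C_comp, prod_comp]
    refine congrArg _ (Finset.prod_congr rfl fun j _ => ?_)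
    rw [sub_comp, X_comp, C_comp, map_sub]
    ring
  rw [hcomp] at h ⊢
  exact key_local c (fun j => a j - β) (fun j => sub_ne_zero.mpr (hβ j)) h

lemma goppa_step {K F : Type*} [Field K] [Fintype K] [Field F] [Fintype F] [Algebra K F]
    {n : ℕ} (G : Polynomial F) (hsq : Squarefree G)
    (α : Fin n → F) (heval : ∀ i, G.eval (α i) ≠ 0) (c : Fin n → K)
    (h : G ^ (Fintype.card K - 1) ∣ goppaSum α c) :
    G ^ Fintype.card K ∣ goppaSum α c := by
  classical
  set q := Fintype.card K with hq
  let E := AlgebraicClosure F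
  let φ : F →+* E := algebraMap F E
  letI : Algebra K E := (φ.comp (algebraMap K F)).toAlgebra
  have halg : ∀ x : K, algebraMap K E x = φ (algebraMap K F x) := fun x => rfl
  have hG0 : G ≠ 0 := hsq.ne_zero
  have hmap : (goppaSum α c).map φ =
      ∑ i, C (algebraMap K E (c i)) * ∏ j ∈ Finset.univ.erase i, (X - C (φ (α j))) := by
    rw [goppaSum, Polynomial.map_sum]
    refine Finset.sum_congr rfl fun i _ => ?_
    rw [Polynomial.map_mul, map_C, Polynomial.map_prod]
    simp [halg]
  rw [← map_dvd_map' φ, Polynomial.map_pow, hmap] at h ⊢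
  set NE := ∑ i, C (algebraMap K E (c i)) *
      ∏ j ∈ Finset.univ.erase i, (X - C (φ (α j))) with hNE
  set GE := G.map φ with hGE
  have hsep : GE.Separable := ((PerfectField.separable_iff_squarefree).mpr hsq).map
  have hnodup := nodup_roots hsep
  have hGE0 : GE ≠ 0 := by
    rw [hGE]
    exact (Polynomial.map_ne_zero_iff φ.injective).mpr hG0
  have hsplit : GE.Splits := IsAlgClosed.splits GE
  have hprodeq := hsplit.eq_prod_roots
  have hroot : ∀ β ∈ GE.roots.toFinset, (X - C β) ^ q ∣ NE := by
    intro β hβ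
    rw [Multiset.mem_toFinset] at hβ
    have hXβ : (X - C β) ∣ GE := dvd_iff_isRoot.mpr (isRoot_of_mem_roots hβ)
    have h1 : (X - C β) ^ (q - 1) ∣ NE := dvd_trans (pow_dvd_pow_of_dvd hXβ _) h
    refine key_root c (fun i => φ (α i)) β ?_ h1
    intro i hia
    have hz : GE.eval (φ (α i)) = 0 := by
      rw [show φ (α i) = β from hia]; exact isRoot_of_mem_roots hβ
    rw [hGE, eval_map, eval₂_at_apply] at hz
    exact heval i ((_root_.map_eq_zero φ).mp hz)
  have hpair : (↑GE.roots.toFinset : Set E).Pairwise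
      (Function.onFun IsCoprime fun β => (X - C β) ^ q) := by
    intro β _ β' _ hne
    exact (isCoprime_X_sub_C_of_isUnit_sub (sub_ne_zero.mpr hne).isUnit).pow
  have hdvd : (∏ β ∈ GE.roots.toFinset, (X - C β) ^ q) ∣ NE :=
    Finset.prod_dvd_of_coprime hpair fun β hβ => hroot β hβ
  have hms : (GE.roots.map fun a => X - C a).prod =
      ∏ β ∈ GE.roots.toFinset, (X - C β) := by
    rw [Finset.prod_eq_multiset_prod]
    congr 1
    rw [Multiset.toFinset_val, Multiset.dedup_eq_self.mpr hnodup]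
  have hGEpow : GE ^ q = C (GE.leadingCoeff ^ q) *
      ∏ β ∈ GE.roots.toFinset, (X - C β) ^ q := by
    conv_lhs => rw [hprodeq]
    rw [mul_pow, ← C_pow, hms, ← Finset.prod_pow]
  have hu : GE.leadingCoeff ≠ 0 := leadingCoeff_ne_zero.mpr hGE0
  have hfac : (∏ β ∈ GE.roots.toFinset, (X - C β) ^ q) =
      GE ^ q * C ((GE.leadingCoeff ^ q)⁻¹) := by
    rw [hGEpow, mul_comm (C (GE.leadingCoeff ^ q)), mul_assoc, ← C_mul,
      mul_inv_cancel₀ (pow_ne_zero _ hu), C_1, mul_one]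
  exact dvd_trans ⟨C ((GE.leadingCoeff ^ q)⁻¹), hfac⟩ hdvd


/-- for a separable polynomial `G` of degree `r ≥ 1` over a degree-`m`
extension `F` of `GF(q)`, the dimension of `Γ(L, G^q)` is at least `n − m(q−1)r`. -/
theorem goppa_dim_Gq_ge {K F : Type*} [Field K] [Fintype K]
    [Field F] [Fintype F] [Algebra K F] {n r : ℕ}
    (G : Polynomial F) (hsq : Squarefree G) (hdeg : G.natDegree = r) (hr : 1 ≤ r)
    (α : Fin n → F) (hα : Function.Injective α)
    (heval : ∀ i, G.eval (α i) ≠ 0) :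
    n - Module.finrank K F * (Fintype.card K - 1) * r ≤
      Module.finrank K (goppaCode (K := K) α (G ^ Fintype.card K)) := by
  classical
  set q := Fintype.card K with hq
  have hq2 : 2 ≤ q := Fintype.one_lt_card
  have hG0 : G ≠ 0 := hsq.ne_zero
  set g : Polynomial F := G ^ (q - 1) with hg
  have hg0 : g ≠ 0 := pow_ne_zero _ hG0
  let Lmap : (Fin n → K) →ₗ[K] AdjoinRoot g :=
    { toFun := fun c => AdjoinRoot.mk g (goppaSum α c)
      map_add' := by
        intro a b
        have h1 : goppaSum α (a + b) = goppaSum α a + goppaSum α b := by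
          simp only [goppaSum, Pi.add_apply, map_add, add_mul, Finset.sum_add_distrib]
        rw [h1, map_add]
      map_smul' := by
        intro k c
        have h1 : goppaSum α (k • c) = Polynomial.C (algebraMap K F k) * goppaSum α c := by
          simp only [goppaSum, Pi.smul_apply, smul_eq_mul, map_mul, Finset.mul_sum, mul_assoc]
        simp only [RingHom.id_apply]
        rw [h1, ← Polynomial.smul_eq_C_mul, algebraMap_smul]
        exact (AdjoinRoot.smul_mk (f := g) (a := k) (x := goppaSum α c)).symm }
  have hker : goppaCode (K := K) α (G ^ q) = LinearMap.ker Lmap := by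
    ext c
    have hmem : c ∈ goppaCode (K := K) α (G ^ q) ↔ G ^ q ∣ goppaSum α c := Iff.rfl
    rw [hmem, LinearMap.mem_ker]
    have hLc : Lmap c = AdjoinRoot.mk g (goppaSum α c) := rfl
    rw [hLc, AdjoinRoot.mk_eq_zero]
    constructor
    · intro hc
      exact dvd_trans (pow_dvd_pow G (Nat.sub_le q 1)) hc
    · intro hc
      exact goppa_step G hsq α heval c hc
  haveI : FiniteDimensional F (AdjoinRoot g) := (AdjoinRoot.powerBasis hg0).finite
  haveI : FiniteDimensional K (AdjoinRoot g) := FiniteDimensional.trans K F (AdjoinRoot g)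
  have hrank := LinearMap.finrank_range_add_finrank_ker Lmap
  rw [Module.finrank_fin_fun] at hrank
  have hle : Module.finrank K (LinearMap.range Lmap) ≤ Module.finrank K (AdjoinRoot g) :=
    Submodule.finrank_le _
  have hA : Module.finrank K (AdjoinRoot g) = Module.finrank K F * ((q - 1) * r) := by
    rw [← Module.finrank_mul_finrank K F (AdjoinRoot g)]
    congr 1
    rw [(AdjoinRoot.powerBasis hg0).finrank]
    show g.natDegree = (q - 1) * r
    rw [hg, natDegree_pow, hdeg]
  rw [hker]
  have hassoc : Module.finrank K F * (q - 1) * r = Module.finrank K F * ((q - 1) * r) :=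
    mul_assoc _ _ _
  omega
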